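/- For the odd derivation D = ∂_θ + θ∂_z and the even operator T = −Σ_{j<0}(A_j 𝓛_j + M_{j+1/2} 𝓖_{j+1/2}) with A_j even and M_{j+1/2} odd Grassmann coefficients, the commutator [D, T] equals h(z,θ)·D, where h(z,θ) = Σ_{j<0}( A_j ((j+1)/2) z^j + θ M_{j+1/2}(j+1)z^j ). -/

import Mathlib

/- Superfunctions F(z,θ) = f(z) + θ g(z) with Grassmann coefficients are encoded as
pairs (f, g) over R = ⋀[z^{±1}]. With D = ∂_θ + θ∂_z encoded by D(f,g) = (g, f'),
𝓛_j, 𝓖_{j+1/2} as in the N=1 superconformal algebra, A_j even and M_{j+1/2} odd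
Grassmann coefficients (finitely many, indexed by j ∈ s ⊆ ℤ_{<0}), and
T = −Σ_j (A_j 𝓛_j + M_{j+1/2} 𝓖_{j+1/2}), the commutator satisfies
[D,T] = h(z,θ)·D with h = Σ_j (A_j ((j+1)/2) z^j + θ M_{j+1/2} (j+1) z^j);
acting on D(f,g) = (g,f'), multiplication by h = h₀ + θh₁ gives (h₀g, h₀f' + h₁g). -/

noncomputable section

abbrev Grass := ExteriorAlgebra ℂ (ℕ →₀ ℂ)
abbrev GLP := AddMonoidAlgebra Grass ℤ

def glpder (f : GLP) : GLP := f.coeff.sum fun n a => AddMonoidAlgebra.single (n - 1) ((n : ℤ) • a)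

def gsingle (k : ℤ) (a : Grass) : GLP := AddMonoidAlgebra.single k a

/-- D = ∂_θ + θ∂_z on (f,g) ↔ f + θg. -/
def Dop (F : GLP × GLP) : GLP × GLP := (F.2, glpder F.1)

/-- 𝓛_j on (f,g). -/
def Lop (j : ℤ) (F : GLP × GLP) : GLP × GLP :=
  (-(gsingle (j + 1) 1 * glpder F.1),
   -(gsingle (j + 1) 1 * glpder F.2) - (((j : ℂ) + 1) / 2) • (gsingle j 1 * F.2))

/-- 𝓖_{j+1/2} on (f,g). -/
def Gop (j : ℤ) (F : GLP × GLP) : GLP × GLP :=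
  (-(gsingle (j + 1) 1 * F.2), gsingle (j + 1) 1 * glpder F.1)

/-- T = −Σ_j (A_j 𝓛_j + M_{j+1/2} 𝓖_{j+1/2}); since M is odd, M·(u + θv) = Mu − θMv,
so the 𝓖-term acts by (M·(𝓖F)₁, −M·(𝓖F)₂), with M· given by left multiplication. -/
def Tsc (s : Finset ℤ) (A M : ℤ → Grass) (F : GLP × GLP) : GLP × GLP :=
  -(∑ j ∈ s,
    ((gsingle 0 (A j) * (Lop j F).1 + gsingle 0 (M j) * (Gop j F).1,
      gsingle 0 (A j) * (Lop j F).2 - gsingle 0 (M j) * (Gop j F).2) : GLP × GLP))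

lemma glpder_zero : glpder 0 = 0 := by simp [glpder]

lemma glpder_single (k : ℤ) (a : Grass) : glpder (gsingle k a) = gsingle (k-1) (k • a) := by
  unfold glpder gsingle
  rw [AddMonoidAlgebra.coeff_single]
  exact Finsupp.sum_single_index (by simp)

lemma glpder_add (f g : GLP) : glpder (f + g) = glpder f + glpder g := by
  unfold glpder
  rw [AddMonoidAlgebra.coeff_add]
  apply Finsupp.sum_add_index <;> intros <;> simp [smul_add]

def glpderHom : GLP →+ GLP where
  toFun := glpder
  map_zero' := glpder_zero
  map_add' := glpder_add

lemma glpder_neg (f : GLP) : glpder (-f) = -glpder f := map_neg glpderHom f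

lemma glpder_sum (s : Finset ℤ) (F : ℤ → GLP) :
    glpder (∑ j ∈ s, F j) = ∑ j ∈ s, glpder (F j) := map_sum glpderHom F s

lemma gsingle_mul (k l : ℤ) (a b : Grass) :
    gsingle k a * gsingle l b = gsingle (k + l) (a * b) :=
  AddMonoidAlgebra.single_mul_single ..

lemma gsingle_add (k : ℤ) (a b : Grass) :
    gsingle k (a + b) = gsingle k a + gsingle k b := by
  unfold gsingle; exact AddMonoidAlgebra.single_add k a b

lemma gsingle_smul (k : ℤ) (c : ℂ) (a : Grass) :
    gsingle k (c • a) = c • gsingle k a := by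
  unfold gsingle
  exact (AddMonoidAlgebra.smul_single c k a).symm

lemma glpder_single_mul (k : ℤ) (c : Grass) (f : GLP) :
    glpder (gsingle k c * f) = gsingle (k-1) (k • c) * f + gsingle k c * glpder f := by
  induction f using AddMonoidAlgebra.induction with
  | zero => simp [glpder_zero]
  | single_add n b f' hn hb ih =>
      have hsb : (AddMonoidAlgebra.single n b : GLP) = gsingle n b := rfl
      rw [hsb]
      simp only [mul_add, glpder_add, ih, glpder_single, gsingle_mul]
      have h1 : (k + n) • (c * b) = (k • c) * b + c * (n • b) := by
        rw [add_smul, smul_mul_assoc, mul_smul_comm]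
      have h3 : (k : ℤ) + (n - 1) = k + n - 1 := by ring
      rw [h1, gsingle_add, h3, show (k : ℤ) - 1 + n = k + n - 1 by ring]
      abel

theorem commutator_D_T_eq_h_D
    (s : Finset ℤ) (hs : ∀ j ∈ s, j < 0)
    (A M : ℤ → Grass)
    (hA : ∀ j, A j ∈ CliffordAlgebra.evenOdd (0 : QuadraticForm ℂ (ℕ →₀ ℂ)) 0)
    (hM : ∀ j, M j ∈ CliffordAlgebra.evenOdd (0 : QuadraticForm ℂ (ℕ →₀ ℂ)) 1)
    (h0 h1 : GLP)
    (hh0 : h0 = ∑ j ∈ s, (((j : ℂ) + 1) / 2) • gsingle j (A j))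
    (hh1 : h1 = ∑ j ∈ s, ((j : ℂ) + 1) • gsingle j (M j)) :
    ∀ F : GLP × GLP,
      Dop (Tsc s A M F) - Tsc s A M (Dop F)
        = (h0 * F.2, h0 * glpder F.1 + h1 * F.2) := by
  subst hh0 hh1
  rintro ⟨f, g⟩
  have key : ∀ (j : ℤ) (c : Grass) (u : GLP),
      gsingle 0 c * (gsingle j 1 * u) = gsingle j c * u := by
    intro j c u
    rw [← mul_assoc, gsingle_mul, zero_add, mul_one]
  have keyder : ∀ (j : ℤ) (c : Grass) (u : GLP),
      glpder (gsingle (j+1) c * u)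
        = ((j : ℂ) + 1) • (gsingle j c * u) + gsingle (j+1) c * glpder u := by
    intro j c u
    rw [glpder_single_mul, add_sub_cancel_right]
    congr 1
    rw [← smul_mul_assoc, ← gsingle_smul]
    congr 2
    rw [← Int.cast_smul_eq_zsmul ℂ]
    push_cast
    ring_nf
  refine Prod.ext ?_ ?_
  · simp only [Tsc, Dop, Lop, Gop, Prod.fst_neg, Prod.snd_neg, Prod.fst_sum, Prod.snd_sum,
      Prod.fst_sub, Prod.snd_sub, Finset.sum_mul]
    rw [neg_sub_neg, ← Finset.sum_sub_distrib]
    refine Finset.sum_congr rfl fun j hj => ?_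
    simp only [mul_neg, mul_sub, mul_add, mul_smul_comm, key, smul_mul_assoc]
    abel
  · simp only [Tsc, Dop, Lop, Gop, Prod.fst_neg, Prod.snd_neg, Prod.fst_sum, Prod.snd_sum,
      Prod.fst_sub, Prod.snd_sub, Finset.sum_mul]
    simp only [mul_neg, mul_sub, mul_smul_comm, key]
    rw [glpder_neg, glpder_sum, neg_sub_neg, ← Finset.sum_add_distrib, ← Finset.sum_sub_distrib]
    refine Finset.sum_congr rfl fun j hj => ?_
    simp only [glpder_add, glpder_neg, keyder, smul_mul_assoc]
    module


end
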